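/- arXiv:2509.08798 — 11 statements merged into one kernel-verified Lean document; each statement's English description precedes it below -/
import Mathlib

section
/- Let G = (V, E) be a finite simple graph and let A, B ⊆ V be independent offensive alliances of G such that A can be transformed into B by one token sliding step. Then for the unique vertices x ∈ A ∖ B and y ∈ B ∖ A, the pair {x, y} is an edge of G and N[x] = {x, y} = N[y]; that is, {x, y} is an isolated edge (both endpoints have degree one). -/
open Finset

variable {V : Type*}

section Defs

variable [Fintype V] [DecidableEq V] (G : SimpleGraph V) [DecidableRel G.Adj]

/-- `NbrsIn G A v` is the number of neighbors of `v` lying in `A` (denoted `d_A(v)`). -/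
def NbrsIn (A : Finset V) (v : V) : ℕ := (A.filter (fun u => G.Adj v u)).card

/-- The boundary `∂A = N(A) ∖ A`: vertices outside `A` with a neighbor in `A`. -/
def Bdry (A : Finset V) : Finset V :=
  Finset.univ.filter (fun v => v ∉ A ∧ ∃ u ∈ A, G.Adj v u)

/-- `A` is a defensive alliance: `d_A(v) + 1 ≥ d_{V∖A}(v)` for every `v ∈ A`. -/
def DefAll (A : Finset V) : Prop := ∀ v ∈ A, NbrsIn G A v + 1 ≥ NbrsIn G Aᶜ v

/-- `A` is an offensive alliance: `d_A(v) ≥ d_{V∖A}(v) + 1` for every `v ∈ ∂A`. -/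
def OffAll (A : Finset V) : Prop := ∀ v ∈ Bdry G A, NbrsIn G A v ≥ NbrsIn G Aᶜ v + 1

/-- `A` is a powerful alliance: both a defensive and an offensive alliance. -/
def PowAll (A : Finset V) : Prop := DefAll G A ∧ OffAll G A

/-- `A` is a dominating set: every vertex is in `A` or has a neighbor in `A`. -/
def DomSet (A : Finset V) : Prop := ∀ v : V, v ∈ A ∨ ∃ u ∈ A, G.Adj v u

/-- `A` is an independent set. -/
def IndSet (A : Finset V) : Prop := ∀ u ∈ A, ∀ w ∈ A, ¬ G.Adj u w

/-- The set of leaves (vertices of degree one) of `G`. -/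
def Leaves : Finset V := Finset.univ.filter (fun v => G.degree v = 1)

/-- `Z(X) = {v ∈ V ∖ N[X] : N(v) ⊆ L ∪ ∂X}`. -/
def ZSet (X : Finset V) : Finset V :=
  Finset.univ.filter (fun v => v ∉ X ∧ (∀ u ∈ X, ¬ G.Adj v u) ∧
    G.neighborFinset v ⊆ Leaves G ∪ Bdry G X)

/-- `Y(X) = N[X] ∪ Z(X) ∪ L`. -/
def YSet (X : Finset V) : Finset V := (X ∪ Bdry G X) ∪ ZSet G X ∪ Leaves G

/-- Global independent offensive alliance: offensive alliance that is dominating and independent. -/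
def GIOA (A : Finset V) : Prop := OffAll G A ∧ DomSet G A ∧ IndSet G A

end Defs

/-- The induced subgraph `G^{≤r}` on vertices of degree at most `r` (modelled as a
graph on all of `V` whose edges are the edges of `G` with both endpoints of degree `≤ r`). -/
def GLE [Fintype V] (G : SimpleGraph V) [DecidableRel G.Adj] (r : ℕ) : SimpleGraph V where
  Adj u w := G.Adj u w ∧ G.degree u ≤ r ∧ G.degree w ≤ r
  symm := ⟨fun u w h => ⟨h.1.symm, h.2.2, h.2.1⟩⟩
  loopless := ⟨fun u h => G.loopless.irrefl u h.1⟩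

section Steps

variable [DecidableEq V]

/-- Token jumping step: `|A| = |B|` and `|A ∖ B| = 1`. -/
def TJStep (A B : Finset V) : Prop := A.card = B.card ∧ (A \ B).card = 1

/-- Token addition step: `A ⊆ B` and `|B ∖ A| = 1`. -/
def TAStep (A B : Finset V) : Prop := A ⊆ B ∧ (B \ A).card = 1

/-- Token removal step: `B ⊆ A` and `|A ∖ B| = 1`. -/
def TRStep (A B : Finset V) : Prop := B ⊆ A ∧ (A \ B).card = 1

/-- Token addition/removal (TAR) step. -/
def TARStep (A B : Finset V) : Prop := TAStep A B ∨ TRStep A B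

/-- `f 0, f 1, …, f (n-1)` is a reconfiguration sequence (with `n` members, i.e. of
length `n`) from `A` to `B` for step relation `step`, all of whose members satisfy `X`. -/
def SeqOn (step : Finset V → Finset V → Prop) (X : Finset V → Prop)
    (f : ℕ → Finset V) (A B : Finset V) (n : ℕ) : Prop :=
  1 ≤ n ∧ f 0 = A ∧ f (n - 1) = B ∧
    (∀ i, i + 1 < n → step (f i) (f (i + 1))) ∧ (∀ i, i < n → X (f i))

/-- There is an `X`-`step` reconfiguration sequence of length `n` from `A` to `B`. -/
def IsSeq (step : Finset V → Finset V → Prop) (X : Finset V → Prop)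
    (A B : Finset V) (n : ℕ) : Prop :=
  ∃ f : ℕ → Finset V, SeqOn step X f A B n

/-- `X` is reconfiguration monotone increasing (rmi). -/
def Rmi (X : Finset V → Prop) : Prop :=
  ∀ A B : Finset V, X A → X B → TJStep A B → ∀ v ∈ B \ A, X (insert v A)

/-- `X` is reconfiguration monotone decreasing (rmd). -/
def Rmd (X : Finset V → Prop) : Prop :=
  ∀ A B : Finset V, X A → X B → TJStep A B → ∀ v ∈ A \ B, X (A.erase v)

end Steps

lemma aux_only_nbr {V : Type*} [Fintype V] [DecidableEq V]
    (G : SimpleGraph V) [DecidableRel G.Adj] (A B : Finset V)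
    (hAind : IndSet G A) (hBoff : OffAll G B)
    (x y : V) (hx : A \ B = {x}) (hy : B \ A = {y}) (hadj : G.Adj x y) :
    ∀ u, G.Adj x u → u = y := by
  have hxAB : x ∈ A \ B := hx ▸ Finset.mem_singleton_self x
  have hyBA : y ∈ B \ A := hy ▸ Finset.mem_singleton_self y
  have hxA : x ∈ A := (Finset.mem_sdiff.mp hxAB).1
  have hxB : x ∉ B := (Finset.mem_sdiff.mp hxAB).2
  have hyB : y ∈ B := (Finset.mem_sdiff.mp hyBA).1
  have hfil : B.filter (fun u => G.Adj x u) = {y} := by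
    ext u
    simp only [Finset.mem_filter, Finset.mem_singleton]
    constructor
    · rintro ⟨huB, hu⟩
      by_contra hne
      have huA : u ∈ A := by
        by_contra huA
        have : u ∈ B \ A := Finset.mem_sdiff.mpr ⟨huB, huA⟩
        rw [hy, Finset.mem_singleton] at this
        exact hne this
      exact hAind x hxA u huA hu
    · rintro rfl; exact ⟨hyB, hadj⟩
  have hbd : x ∈ Bdry G B := by
    simp only [Bdry, Finset.mem_filter, Finset.mem_univ, true_and]
    exact ⟨hxB, y, hyB, hadj⟩
  have hoff := hBoff x hbd
  rw [NbrsIn, NbrsIn, hfil, Finset.card_singleton] at hoff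
  have h0 : (Bᶜ.filter (fun u => G.Adj x u)).card = 0 := by omega
  rw [Finset.card_eq_zero] at h0
  intro u hu
  have huB : u ∈ B := by
    by_contra huB
    have : u ∈ Bᶜ.filter (fun u => G.Adj x u) := by
      simp [Finset.mem_compl, huB, hu]
    rw [h0] at this
    exact absurd this (Finset.notMem_empty u)
  by_contra hne
  have huA : u ∈ A := by
    by_contra huA
    have : u ∈ B \ A := Finset.mem_sdiff.mpr ⟨huB, huA⟩
    rw [hy, Finset.mem_singleton] at this
    exact hne this
  exact hAind x hxA u huA hu

theorem stmt_0 {V : Type*} [Fintype V] [DecidableEq V]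
    (G : SimpleGraph V) [DecidableRel G.Adj] (A B : Finset V)
    (hAoff : OffAll G A) (hAind : IndSet G A)
    (hBoff : OffAll G B) (hBind : IndSet G B)
    (hTJ : TJStep A B)
    (x y : V) (hx : A \ B = {x}) (hy : B \ A = {y}) (hadj : G.Adj x y) :
    G.Adj x y ∧ insert x (G.neighborFinset x) = ({x, y} : Finset V) ∧
      insert y (G.neighborFinset y) = ({x, y} : Finset V) := by
  have kx : ∀ u, G.Adj x u → u = y := aux_only_nbr G A B hAind hBoff x y hx hy hadj
  have ky : ∀ u, G.Adj y u → u = x := aux_only_nbr G B A hBind hAoff y x hy hx hadj.symm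
  refine ⟨hadj, ?_, ?_⟩
  · ext a
    simp only [Finset.mem_insert, SimpleGraph.mem_neighborFinset, Finset.mem_singleton]
    constructor
    · rintro (rfl | h); · exact Or.inl rfl
      · exact Or.inr (kx a h)
    · rintro (rfl | rfl); · exact Or.inl rfl
      · exact Or.inr hadj
  · ext a
    simp only [Finset.mem_insert, SimpleGraph.mem_neighborFinset, Finset.mem_singleton]
    constructor
    · rintro (rfl | h); · exact Or.inr rfl
      · exact Or.inl (ky a h)
    · rintro (rfl | rfl)
      · exact Or.inr hadj.symm
      · exact Or.inl rfl
end

section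
/- Let G = (V, E) be a finite simple graph, let X be a reconfiguration monotone increasing property of vertex sets, and let A_s, A_t ⊆ V satisfy X with |A_s| = |A_t| = k. Then there exists an X-TJ sequence from A_s to A_t of length at most ℓ if and only if there exists an X-TAR sequence from A_s to A_t with threshold k + 1 of length at most 2ℓ. -/
open Finset

variable {V : Type*}

section AuxLemmas

variable {V : Type*} [DecidableEq V]

instance decTAStep (A B : Finset V) : Decidable (TAStep A B) := by
  unfold TAStep; infer_instance

lemma isTJ_refl (X : Finset V → Prop) (A : Finset V) (h : X A) : IsSeq TJStep X A A 1 :=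
  ⟨fun _ => A, le_refl 1, rfl, rfl, fun i hi => by omega, fun _ _ => h⟩

lemma tr_exists {A B : Finset V} (h : TRStep A B) : ∃ v, v ∉ B ∧ A = insert v B := by
  obtain ⟨hsub, hc⟩ := h
  obtain ⟨v, hv⟩ := Finset.card_eq_one.mp hc
  have hvm : v ∈ A \ B := hv ▸ Finset.mem_singleton_self v
  refine ⟨v, (Finset.mem_sdiff.mp hvm).2, ?_⟩
  have h2 := Finset.sdiff_union_of_subset hsub
  rw [hv] at h2
  rw [← h2, Finset.insert_eq]

lemma ta_exists {A B : Finset V} (h : TAStep A B) : ∃ w, w ∉ A ∧ B = insert w A :=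
  tr_exists ⟨h.1, h.2⟩

lemma tr_card {A B : Finset V} (h : TRStep A B) : A.card = B.card + 1 := by
  obtain ⟨v, hv, rfl⟩ := tr_exists h
  exact Finset.card_insert_of_notMem hv

lemma ta_card {A B : Finset V} (h : TAStep A B) : B.card = A.card + 1 :=
  tr_card ⟨h.1, h.2⟩

lemma sdiff_ins_ins {M : Finset V} {v w : V} (hv : v ∉ M) (hne : v ≠ w) :
    (insert v M) \ (insert w M) = {v} := by
  ext x
  simp only [Finset.mem_sdiff, Finset.mem_insert, Finset.mem_singleton]
  constructor
  · rintro ⟨hx1 | hx1, hx2⟩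
    · exact hx1
    · exact absurd (Or.inr hx1) hx2
  · rintro rfl
    exact ⟨Or.inl rfl, by tauto⟩

lemma tj_of_ins {M : Finset V} {v w : V} (hv : v ∉ M) (hw : w ∉ M) (hne : v ≠ w) :
    TJStep (insert v M) (insert w M) := by
  constructor
  · rw [Finset.card_insert_of_notMem hv, Finset.card_insert_of_notMem hw]
  · rw [sdiff_ins_ins hv hne]
    exact Finset.card_singleton v

lemma tj_cons {X : Finset V → Prop} {A C B : Finset V} {m : ℕ} (h : IsSeq TJStep X C B m)
    (hs : TJStep A C) (hXA : X A) : IsSeq TJStep X A B (m + 1) := by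
  obtain ⟨f, h1, h0, he, hst, hx⟩ := h
  refine ⟨fun i => if i = 0 then A else f (i - 1), by omega, by simp, ?_, ?_, ?_⟩
  · have : m + 1 - 1 = m := by omega
    rw [this]
    have hm0 : m ≠ 0 := by omega
    simp only [hm0, if_false]
    exact he
  · intro i hi
    rcases Nat.eq_zero_or_pos i with rfl | hpos
    · simpa [h0] using hs
    · have hi0 : i ≠ 0 := by omega
      have hi10 : i + 1 ≠ 0 := by omega
      simp only [hi0, hi10, if_false]
      have : i - 1 + 1 = i ∧ i + 1 - 1 = i := by omega
      have hstep := hst (i - 1) (by omega)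
      rw [this.1] at hstep
      simpa [this.2] using hstep
  · intro i hi
    rcases Nat.eq_zero_or_pos i with rfl | hpos
    · simpa using hXA
    · have hi0 : i ≠ 0 := by omega
      simp only [hi0, if_false]
      exact hx (i - 1) (by omega)

lemma arith_helper (n j' : ℕ) (h3 : 3 ≤ n) (hj : j' ≤ n - 3) :
    (n - 2) * (n - 2) + j' + 1 ≤ n * n := by
  obtain ⟨m, rfl⟩ : ∃ m, n = m + 3 := ⟨n - 3, by omega⟩
  have e1 : m + 3 - 2 = m + 1 := by omega
  have e2 : m + 3 - 3 = m := by omega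
  rw [e1]
  rw [e2] at hj
  nlinarith

lemma forward_lem (X : Finset V → Prop) (hrmi : Rmi X) (k n : ℕ)
    (A B : Finset V) (h : IsSeq TJStep X A B n) (hA : A.card = k) :
    IsSeq TARStep (fun S => X S ∧ S.card ≤ k + 1) A B (2 * n - 1) := by
  obtain ⟨f, hn1, h0, hB, hstep, hX⟩ := h
  have hcard : ∀ i, i < n → (f i).card = k := by
    intro i
    induction i with
    | zero => intro _; rw [h0]; exact hA
    | succ j ih =>
      intro hj
      rw [← (hstep j hj).1]
      exact ih (by omega)
  have hinfo : ∀ q, q + 1 < n →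
      X (f q ∪ f (q + 1)) ∧ (f q ∪ f (q + 1)).card = k + 1 ∧
      ((f q ∪ f (q + 1)) \ f q).card = 1 ∧ ((f q ∪ f (q + 1)) \ f (q + 1)).card = 1 := by
    intro q hq
    obtain ⟨hceq, hcd⟩ := hstep q hq
    have hcd2 : (f (q + 1) \ f q).card = 1 := by
      rw [← Finset.card_sdiff_comm hceq]; exact hcd
    obtain ⟨w, hw⟩ := Finset.card_eq_one.mp hcd2
    have hwm : w ∈ f (q + 1) \ f q := hw ▸ Finset.mem_singleton_self w
    have hwn : w ∉ f q := (Finset.mem_sdiff.mp hwm).2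
    have hun : f q ∪ f (q + 1) = insert w (f q) := by
      rw [← Finset.union_sdiff_self_eq_union, hw, Finset.union_comm, ← Finset.insert_eq]
    have hXu : X (f q ∪ f (q + 1)) := by
      rw [hun]
      exact hrmi (f q) (f (q + 1)) (hX q (by omega)) (hX (q + 1) (by omega)) (hstep q hq) w hwm
    have hd1 : (f q ∪ f (q + 1)) \ f q = f (q + 1) \ f q := by
      ext x; simp only [Finset.mem_sdiff, Finset.mem_union]; tauto
    have hd2 : (f q ∪ f (q + 1)) \ f (q + 1) = f q \ f (q + 1) := by
      ext x; simp only [Finset.mem_sdiff, Finset.mem_union]; tauto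
    refine ⟨hXu, ?_, ?_, ?_⟩
    · rw [hun, Finset.card_insert_of_notMem hwn, hcard q (by omega)]
    · rw [hd1]; exact hcd2
    · rw [hd2]; exact hcd
  refine ⟨fun m => if m % 2 = 0 then f (m / 2) else f (m / 2) ∪ f (m / 2 + 1),
    by omega, by simpa using h0, ?_, ?_, ?_⟩
  · have e1 : (2 * n - 1 - 1) % 2 = 0 := by omega
    have e2 : (2 * n - 1 - 1) / 2 = n - 1 := by omega
    simp only [e1, if_pos, e2]
    exact hB
  · intro i hi
    rcases Nat.even_or_odd i with ⟨q, hq⟩ | ⟨q, hq⟩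
    · have e1 : i % 2 = 0 := by omega
      have e2 : ¬ (i + 1) % 2 = 0 := by omega
      have e3 : i / 2 = q := by omega
      have e4 : (i + 1) / 2 = q := by omega
      simp only [e1, e2, if_pos, if_false, e3, e4, if_true]
      left
      exact ⟨Finset.subset_union_left, (hinfo q (by omega)).2.2.1⟩
    · have e1 : ¬ i % 2 = 0 := by omega
      have e2 : (i + 1) % 2 = 0 := by omega
      have e3 : i / 2 = q := by omega
      have e4 : (i + 1) / 2 = q + 1 := by omega
      simp only [e1, e2, if_pos, if_false, e3, e4, if_true]
      right
      exact ⟨Finset.subset_union_right, (hinfo q (by omega)).2.2.2⟩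
  · intro i hi
    rcases Nat.even_or_odd i with ⟨q, hq⟩ | ⟨q, hq⟩
    · have e1 : i % 2 = 0 := by omega
      have e3 : i / 2 = q := by omega
      simp only [e1, if_pos, e3, if_true]
      exact ⟨hX q (by omega), by rw [hcard q (by omega)]; omega⟩
    · have e1 : ¬ i % 2 = 0 := by omega
      have e3 : i / 2 = q := by omega
      simp only [e1, if_false, e3]
      obtain ⟨hXu, hcu, -, -⟩ := hinfo q (by omega)
      exact ⟨hXu, by omega⟩

lemma backward_key (X : Finset V → Prop) (hrmi : Rmi X) (k : ℕ) :
    ∀ μ n (f : ℕ → Finset V) (A B : Finset V),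
      (∀ j, j ≤ n - 1 → (∀ i, i < j → ¬ TAStep (f i) (f (i + 1))) → n * n + j ≤ μ) →
      SeqOn TARStep (fun S => X S ∧ S.card ≤ k + 1) f A B n →
      A.card = k → B.card = k →
      ∃ m, m ≤ (n + 1) / 2 ∧ IsSeq TJStep X A B m := by
  intro μ
  induction μ using Nat.strong_induction_on with
  | _ μ IH =>
  intro n f A B hμ hseq hA hB
  obtain ⟨hn1, h0, hend, hstep, hX⟩ := hseq
  rcases eq_or_lt_of_le hn1 with h1 | h2
  · -- n = 1
    have hAB : A = B := by rw [← h0, ← hend, ← h1]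
    subst hAB
    exact ⟨1, by omega, isTJ_refl X A (by rw [← h0]; exact (hX 0 (by omega)).1)⟩
  -- n ≥ 2
  have hμ0 : n * n ≤ μ := by
    have := hμ 0 (by omega) (fun i hi => absurd hi (Nat.not_lt_zero i))
    omega
  have hnn : n ≤ n * n := Nat.le_mul_of_pos_left n (by omega)
  have hex : ∃ j, TAStep (f j) (f (j + 1)) ∨ n ≤ j + 1 := ⟨n - 1, Or.inr (by omega)⟩
  obtain ⟨j, hPj, hmin⟩ : ∃ j, (TAStep (f j) (f (j + 1)) ∨ n ≤ j + 1) ∧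
      ∀ i, i < j → ¬ (TAStep (f i) (f (i + 1)) ∨ n ≤ i + 1) :=
    ⟨Nat.find hex, Nat.find_spec hex, fun i hi => Nat.find_min hex hi⟩
  have hminTA : ∀ i, i < j → ¬ TAStep (f i) (f (i + 1)) := fun i hi h => (hmin i hi) (Or.inl h)
  have hminlt : ∀ i, i < j → i + 1 < n := by
    intro i hi
    by_contra h
    exact (hmin i hi) (Or.inr (by omega))
  have hjn : j ≤ n - 1 := by
    by_contra h
    exact hmin (n - 1) (by omega) (Or.inr (by omega))
  have hμj : n * n + j ≤ μ := hμ j hjn hminTA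
  have hTR : ∀ i, i < j → TRStep (f i) (f (i + 1)) :=
    fun i hi => (hstep i (hminlt i hi)).resolve_left (hminTA i hi)
  have hcchain : ∀ i, i ≤ j → (f i).card + i = k := by
    intro i
    induction i with
    | zero => intro _; simp [h0, hA]
    | succ p ih =>
      intro hp
      have h1 := tr_card (hTR p (by omega))
      have h2 := ih (by omega)
      omega
  by_cases hlast : n ≤ j + 1
  · -- all steps removals: contradiction
    exfalso
    have := hcchain (n - 1) (by omega)
    rw [hend] at this
    omega
  have hTA : TAStep (f j) (f (j + 1)) := hPj.resolve_right hlast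
  have hjlt : j + 1 < n := by omega
  rcases Nat.eq_zero_or_pos j with hj0 | hjpos
  · -- addition first: j = 0
    subst hj0
    have hTA1 : TAStep A (f 1) := by rw [← h0]; exact hTA
    obtain ⟨w, hw, hfw⟩ := ta_exists hTA1
    have hn3 : 3 ≤ n := by
      by_contra h
      have hn2 : n = 2 := by omega
      have hB1 : f 1 = B := by rw [← hend, hn2]
      rw [hB1] at hfw
      have hci := Finset.card_insert_of_notMem hw
      rw [← hfw, hB, hA] at hci
      omega
    have hstep1 : TRStep (f 1) (f 2) := by
      rcases hstep 1 (by omega) with h | h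
      · exfalso
        have hc1 : (f 2).card = (f 1).card + 1 := ta_card h
        have hc0 : (f 1).card = k + 1 := by
          rw [hfw, Finset.card_insert_of_notMem hw, hA]
        have := (hX 2 (by omega)).2
        omega
      · exact h
    obtain ⟨v, hv, hfv⟩ := tr_exists hstep1
    have hcf2 : (f 2).card = k := by
      have h1 := ta_card hTA1
      have h2 := tr_card hstep1
      omega
    -- tail sequence from f 2 to B of length n - 2
    have htail : ∃ m, m ≤ (n - 2 + 1) / 2 ∧ IsSeq TJStep X (f 2) B m := by
      apply IH (μ - 1) (by omega) (n - 2) (fun i => f (i + 2))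
      · intro j' hj' _
        have := arith_helper n j' hn3 (by omega)
        omega
      · refine ⟨by omega, rfl, ?_, ?_, ?_⟩
        · show f (n - 2 - 1 + 2) = B
          have e : n - 2 - 1 + 2 = n - 1 := by omega
          rw [e]; exact hend
        · intro i hi
          show TARStep (f (i + 2)) (f (i + 1 + 2))
          have e : i + 1 + 2 = i + 2 + 1 := by omega
          rw [e]
          exact hstep (i + 2) (by omega)
        · intro i hi
          exact hX (i + 2) (by omega)
      · exact hcf2
      · exact hB
    obtain ⟨m, hm, hseq2⟩ := htail
    by_cases hvw : w = v
    · -- f 2 = A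
      have hf2 : f 2 = A := by
        have heq : insert w A = insert v (f 2) := by rw [← hfw, hfv]
        subst hvw
        have := congrArg (fun s => Finset.erase s w) heq
        simpa [Finset.erase_insert hw, Finset.erase_insert hv] using this.symm
      rw [hf2] at hseq2
      exact ⟨m, by omega, hseq2⟩
    · -- TJ step A → f 2
      have heq : insert w A = insert v (f 2) := by rw [← hfw, hfv]
      have hvA : v ∈ A := by
        have : v ∈ insert w A := heq ▸ Finset.mem_insert_self v (f 2)
        rcases Finset.mem_insert.mp this with h | h
        · exact absurd h.symm hvw
        · exact h
      have htj : TJStep A (f 2) := by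
        constructor
        · rw [hA, hcf2]
        · have : A \ f 2 = {v} := by
            ext x
            simp only [Finset.mem_sdiff, Finset.mem_singleton]
            constructor
            · rintro ⟨hx1, hx2⟩
              have : x ∈ insert v (f 2) := heq ▸ Finset.mem_insert_of_mem hx1
              rcases Finset.mem_insert.mp this with h | h
              · exact h
              · exact absurd h hx2
            · rintro rfl
              exact ⟨hvA, hv⟩
          rw [this]; exact Finset.card_singleton v
      have hres := tj_cons hseq2 htj (by rw [← h0]; exact (hX 0 (by omega)).1)
      exact ⟨m + 1, by omega, hres⟩
  · -- j ≥ 1: first j steps are removals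
    obtain ⟨v', hv', hfv'⟩ := tr_exists (hTR (j - 1) (by omega))
    obtain ⟨w', hw', hfw'⟩ := ta_exists hTA
    have ej : j - 1 + 1 = j := by omega
    rw [ej] at hfv' hv'
    have hcardj1 : (f (j - 1)).card ≤ k := by
      have := hcchain (j - 1) (by omega)
      omega
    by_cases hvw : v' = w'
    · -- f (j+1) = f (j-1): splice out
      subst hvw
      have hfeq : f (j + 1) = f (j - 1) := by rw [hfw', hfv']
      have hn3 : 3 ≤ n := by omega
      have hres : ∃ m, m ≤ (n - 2 + 1) / 2 ∧ IsSeq TJStep X A B m := by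
        apply IH (μ - 1) (by omega) (n - 2) (fun i => if i < j then f i else f (i + 2))
        · intro j' hj' _
          have := arith_helper n j' hn3 (by omega)
          omega
        · refine ⟨by omega, ?_, ?_, ?_, ?_⟩
          · beta_reduce
            rw [if_pos hjpos]
            exact h0
          · beta_reduce
            by_cases hc : n - 2 - 1 < j
            · have hjeq : j = n - 2 := by omega
              have e : n - 2 - 1 = j - 1 := by omega
              rw [if_pos hc, e, ← hfeq, hjeq]
              have e2 : n - 2 + 1 = n - 1 := by omega
              rw [e2]
              exact hend
            · rw [if_neg hc]
              have e : n - 2 - 1 + 2 = n - 1 := by omega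
              rw [e]
              exact hend
          · intro i hi
            beta_reduce
            rcases lt_trichotomy (i + 1) j with hc | hc | hc
            · have hc2 : i < j := by omega
              rw [if_pos hc2, if_pos hc]
              exact hstep i (by omega)
            · have hc2 : i < j := by omega
              have hc3 : ¬ i + 1 < j := by omega
              rw [if_pos hc2, if_neg hc3]
              have e : i + 1 + 2 = (j + 1) + 1 := by omega
              have e2 : i = j - 1 := by omega
              rw [e, e2, ← hfeq]
              exact hstep (j + 1) (by omega)
            · have hc2 : ¬ i < j := by omega
              have hc3 : ¬ i + 1 < j := by omega
              rw [if_neg hc2, if_neg hc3]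
              have e : i + 1 + 2 = (i + 2) + 1 := by omega
              rw [e]
              exact hstep (i + 2) (by omega)
          · intro i hi
            beta_reduce
            by_cases hc : i < j
            · rw [if_pos hc]
              exact hX i (by omega)
            · rw [if_neg hc]
              exact hX (i + 2) (by omega)
        · exact hA
        · exact hB
      obtain ⟨m, hm, hs2⟩ := hres
      exact ⟨m, by omega, hs2⟩
    · -- swap: replace f j by C = insert w' (f (j - 1))
      have hwj1 : w' ∉ f (j - 1) := by
        rw [hfv']
        simp only [Finset.mem_insert]
        push_neg
        exact ⟨fun h => hvw h.symm, hw'⟩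
      have htjstep : TJStep (f (j - 1)) (f (j + 1)) := by
        rw [hfv', hfw']
        exact tj_of_ins hv' hw' hvw
      have hXC : X (insert w' (f (j - 1))) := by
        apply hrmi (f (j - 1)) (f (j + 1)) (hX (j - 1) (by omega)).1 (hX (j + 1) (by omega)).1
          htjstep w'
        rw [Finset.mem_sdiff]
        exact ⟨hfw' ▸ Finset.mem_insert_self w' (f j), hwj1⟩
      have hCcard : (insert w' (f (j - 1))).card ≤ k + 1 := by
        rw [Finset.card_insert_of_notMem hwj1]
        omega
      set C := insert w' (f (j - 1)) with hCdef
      have hTAC : TAStep (f (j - 1)) C := by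
        refine ⟨Finset.subset_insert _ _, ?_⟩
        have hd : C \ f (j - 1) = {w'} := by
          ext x
          simp only [hCdef, Finset.mem_sdiff, Finset.mem_insert, Finset.mem_singleton]
          constructor
          · rintro ⟨hx1 | hx1, hx2⟩
            · exact hx1
            · exact absurd hx1 hx2
          · rintro rfl
            exact ⟨Or.inl rfl, hwj1⟩
        rw [hd]; exact Finset.card_singleton w'
      have hTRC : TRStep C (f (j + 1)) := by
        constructor
        · rw [hfw', hCdef, hfv']
          exact Finset.insert_subset_insert w' (Finset.subset_insert v' (f j))
        · have hd : C \ f (j + 1) = {v'} := by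
            rw [hCdef, hfv', hfw']
            ext x
            simp only [Finset.mem_sdiff, Finset.mem_insert, Finset.mem_singleton]
            constructor
            · rintro ⟨hx1 | hx1 | hx1, hx2⟩
              · exact absurd (Or.inl hx1) hx2
              · exact hx1
              · exact absurd (Or.inr hx1) hx2
            · rintro rfl
              refine ⟨Or.inr (Or.inl rfl), ?_⟩
              push_neg
              exact ⟨hvw, hv'⟩
          rw [hd]; exact Finset.card_singleton v'
      -- new sequence g
      apply IH (μ - 1) (by omega) n (fun i => if i = j then C else f i) A B
      · -- measure hypothesis
        intro j' hj' hnoTA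
        have hj'le : j' ≤ j - 1 := by
          by_contra h
          have hjj : j - 1 < j' := by omega
          apply hnoTA (j - 1) hjj
          beta_reduce
          have e1 : ¬ (j - 1 = j) := by omega
          rw [if_neg e1, ej, if_pos rfl]
          exact hTAC
        omega
      · refine ⟨by omega, ?_, ?_, ?_, ?_⟩
        · beta_reduce
          have e : ¬ (0 = j) := by omega
          rw [if_neg e]
          exact h0
        · beta_reduce
          have e : ¬ (n - 1 = j) := by omega
          rw [if_neg e]
          exact hend
        · intro i hi
          beta_reduce
          rcases lt_trichotomy (i + 1) j with hc | hc | hc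
          · have e1 : ¬ (i = j) := by omega
            have e2 : ¬ (i + 1 = j) := by omega
            rw [if_neg e1, if_neg e2]
            exact hstep i (by omega)
          · have e1 : ¬ (i = j) := by omega
            rw [if_neg e1, if_pos hc]
            have e3 : i = j - 1 := by omega
            rw [e3]
            exact Or.inl hTAC
          · rcases eq_or_lt_of_le (by omega : j ≤ i) with hc2 | hc2
            · have e2 : ¬ (i + 1 = j) := by omega
              subst hc2
              rw [if_pos rfl, if_neg e2]
              exact Or.inr hTRC
            · have e1 : ¬ (i = j) := by omega
              have e2 : ¬ (i + 1 = j) := by omega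
              rw [if_neg e1, if_neg e2]
              exact hstep i (by omega)
        · intro i hi
          beta_reduce
          by_cases hc : i = j
          · rw [if_pos hc]
            exact ⟨hXC, hCcard⟩
          · rw [if_neg hc]
            exact hX i (by omega)
      · exact hA
      · exact hB

end AuxLemmas

theorem stmt_3 {V : Type*} [Fintype V] [DecidableEq V]
    (G : SimpleGraph V) [DecidableRel G.Adj]
    (X : Finset V → Prop) (hrmi : Rmi X)
    (A_s A_t : Finset V) (k ℓ : ℕ)
    (hs : X A_s) (ht : X A_t) (hks : A_s.card = k) (hkt : A_t.card = k) :
    (∃ n ≤ ℓ, IsSeq TJStep X A_s A_t n) ↔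
      (∃ n ≤ 2 * ℓ, IsSeq TARStep (fun S => X S ∧ S.card ≤ k + 1) A_s A_t n) := by
  constructor
  · rintro ⟨n, hn, hseq⟩
    have hn1 : 1 ≤ n := hseq.choose_spec.1
    refine ⟨2 * n - 1, by omega, ?_⟩
    exact forward_lem X hrmi k n A_s A_t hseq hks
  · rintro ⟨n, hn, hseq⟩
    obtain ⟨m, hm, hres⟩ := backward_key X hrmi k (n * n + n) n hseq.choose A_s A_t
      (fun j hj _ => Nat.add_le_add_left (hj.trans (Nat.sub_le n 1)) (n * n)) hseq.choose_spec hks hkt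
    exact ⟨m, by omega, hres⟩
end

section
/- Let G = (V, E) be a finite simple graph. The property of being an offensive alliance is reconfiguration monotone increasing: if A and B are offensive alliances of G such that B is obtained from A by one token jumping step, and v is the unique vertex of B ∖ A, then A ∪ {v} is an offensive alliance. -/
open Finset

variable {V : Type*}

lemma nbrsIn_mono {V : Type*} [Fintype V] [DecidableEq V]
    (G : SimpleGraph V) [DecidableRel G.Adj] {A B : Finset V} (h : A ⊆ B) (v : V) :
    NbrsIn G A v ≤ NbrsIn G B v :=
  Finset.card_le_card (Finset.filter_subset_filter _ h)

lemma offAll_union {V : Type*} [Fintype V] [DecidableEq V]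
    (G : SimpleGraph V) [DecidableRel G.Adj] {A B : Finset V}
    (hA : OffAll G A) (hB : OffAll G B) : OffAll G (A ∪ B) := by
  intro u hu
  simp only [Bdry, Finset.mem_filter, Finset.mem_union] at hu
  obtain ⟨-, hnot, w, hw, hadj⟩ := hu
  push_neg at hnot
  rcases hw with hw | hw
  · have h1 : NbrsIn G A u ≥ NbrsIn G Aᶜ u + 1 := by
      apply hA; simp only [Bdry, Finset.mem_filter, Finset.mem_univ, true_and]
      exact ⟨hnot.1, w, hw, hadj⟩
    calc NbrsIn G (A ∪ B)ᶜ u + 1 ≤ NbrsIn G Aᶜ u + 1 := by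
          have : (A ∪ B)ᶜ ⊆ Aᶜ := Finset.compl_subset_compl.mpr Finset.subset_union_left
          exact Nat.add_le_add_right (nbrsIn_mono G this u) 1
      _ ≤ NbrsIn G A u := h1
      _ ≤ NbrsIn G (A ∪ B) u := nbrsIn_mono G Finset.subset_union_left u
  · have h1 : NbrsIn G B u ≥ NbrsIn G Bᶜ u + 1 := by
      apply hB; simp only [Bdry, Finset.mem_filter, Finset.mem_univ, true_and]
      exact ⟨hnot.2, w, hw, hadj⟩
    calc NbrsIn G (A ∪ B)ᶜ u + 1 ≤ NbrsIn G Bᶜ u + 1 := by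
          have : (A ∪ B)ᶜ ⊆ Bᶜ := Finset.compl_subset_compl.mpr Finset.subset_union_right
          exact Nat.add_le_add_right (nbrsIn_mono G this u) 1
      _ ≤ NbrsIn G B u := h1
      _ ≤ NbrsIn G (A ∪ B) u := nbrsIn_mono G Finset.subset_union_right u

theorem stmt_5 {V : Type*} [Fintype V] [DecidableEq V]
    (G : SimpleGraph V) [DecidableRel G.Adj] :
    Rmi (fun A : Finset V => OffAll G A) := by
  intro A B hA hB hTJ v hv
  have hcard : (B \ A).card = 1 := by
    rw [Finset.card_sdiff_comm hTJ.1.symm]; exact hTJ.2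
  have hBA : B \ A = {v} := Finset.eq_singleton_iff_unique_mem.mpr
    ⟨hv, fun w hw => Finset.card_le_one.mp hcard.le w hw v hv⟩
  have hins : insert v A = A ∪ B := by
    rw [Finset.insert_eq, Finset.union_comm {v} A, ← hBA, Finset.union_sdiff_self_eq_union]
  rw [hins]
  exact offAll_union G hA hB
end

section
/- Let G = (V, E) be a finite simple graph and let A, B ⊆ V be independent offensive alliances such that B is obtained from A by one token jumping step, with u the unique vertex of A ∖ B and v the unique vertex of B ∖ A. If u and v are not adjacent in G, then A ∪ {v} is an independent offensive alliance. -/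
open Finset

variable {V : Type*}

theorem stmt_9 {V : Type*} [Fintype V] [DecidableEq V]
    (G : SimpleGraph V) [DecidableRel G.Adj] (A B : Finset V)
    (hAoff : OffAll G A) (hAind : IndSet G A)
    (hBoff : OffAll G B) (hBind : IndSet G B)
    (hTJ : TJStep A B)
    (u v : V) (hu : A \ B = {u}) (hv : B \ A = {v}) (hnadj : ¬ G.Adj u v) :
    OffAll G (insert v A) ∧ IndSet G (insert v A) := by
  have hmono : ∀ (C D : Finset V) (x : V), D ⊆ C → NbrsIn G D x ≤ NbrsIn G C x := by
    intro C D x h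
    exact Finset.card_le_card (Finset.filter_subset_filter _ h)
  have hvB : v ∈ B := by
    have : v ∈ B \ A := hv ▸ Finset.mem_singleton_self v
    exact (Finset.mem_sdiff.mp this).1
  have hvA : v ∉ A := by
    have : v ∈ B \ A := hv ▸ Finset.mem_singleton_self v
    exact (Finset.mem_sdiff.mp this).2
  have hBsub : B ⊆ insert v A := by
    intro b hb
    by_cases hbA : b ∈ A
    · exact Finset.mem_insert_of_mem hbA
    · have : b ∈ B \ A := Finset.mem_sdiff.mpr ⟨hb, hbA⟩
      rw [hv, Finset.mem_singleton] at this
      exact this ▸ Finset.mem_insert_self _ _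
  have hAsub : A ⊆ insert v A := Finset.subset_insert _ _
  have hvb : ∀ b ∈ A, ¬ G.Adj v b := by
    intro b hb hadj
    by_cases hbB : b ∈ B
    · exact hBind v hvB b hbB hadj
    · have : b ∈ A \ B := Finset.mem_sdiff.mpr ⟨hb, hbB⟩
      rw [hu, Finset.mem_singleton] at this
      exact hnadj (this ▸ hadj.symm)
  constructor
  · intro x hx
    simp only [Bdry, Finset.mem_filter] at hx
    obtain ⟨-, hxC, w, hw, hadj⟩ := hx
    have hCcA : (insert v A)ᶜ ⊆ Aᶜ := Finset.compl_subset_compl.mpr hAsub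
    have hCcB : (insert v A)ᶜ ⊆ Bᶜ := Finset.compl_subset_compl.mpr hBsub
    by_cases hAnbr : ∃ w ∈ A, G.Adj x w
    · have hxA : x ∉ A := fun h => hxC (Finset.mem_insert_of_mem h)
      have hbd : x ∈ Bdry G A := by
        simp only [Bdry, Finset.mem_filter, Finset.mem_univ, true_and]
        exact ⟨hxA, hAnbr⟩
      calc NbrsIn G (insert v A)ᶜ x + 1 ≤ NbrsIn G Aᶜ x + 1 := by
              exact Nat.add_le_add_right (hmono _ _ _ hCcA) 1
        _ ≤ NbrsIn G A x := hAoff x hbd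
        _ ≤ NbrsIn G (insert v A) x := hmono _ _ _ hAsub
    · have hxB : x ∉ B := fun h => hxC (hBsub h)
      have hwv : w = v := by
        rcases Finset.mem_insert.mp hw with h | h
        · exact h
        · exact absurd ⟨w, h, hadj⟩ hAnbr
      have hbd : x ∈ Bdry G B := by
        simp only [Bdry, Finset.mem_filter, Finset.mem_univ, true_and]
        exact ⟨hxB, v, hvB, hwv ▸ hadj⟩
      calc NbrsIn G (insert v A)ᶜ x + 1 ≤ NbrsIn G Bᶜ x + 1 := by
              exact Nat.add_le_add_right (hmono _ _ _ hCcB) 1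
        _ ≤ NbrsIn G B x := hBoff x hbd
        _ ≤ NbrsIn G (insert v A) x := hmono _ _ _ hBsub
  · intro a ha b hb hadj
    rcases Finset.mem_insert.mp ha with rfl | haA <;>
      rcases Finset.mem_insert.mp hb with rfl | hbA
    · exact G.loopless.irrefl _ hadj
    · exact hvb b hbA hadj
    · exact hvb a haA hadj.symm
    · exact hAind a haA b hbA hadj
end

section
/- Let G = (V, E) be a finite simple graph and let A ⊆ V be a global independent offensive alliance. Then for every v ∈ A, the set A ∖ {v} is not a dominating set, and for every u ∈ V ∖ A, the set A ∪ {u} is not an independent set. Consequently, for any two distinct global independent offensive alliances A_s ≠ A_t of G, there is no TAR sequence from A_s to A_t all of whose members are global independent offensive alliances. -/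
open Finset

variable {V : Type*}

theorem stmt_10 {V : Type*} [Fintype V] [DecidableEq V]
    (G : SimpleGraph V) [DecidableRel G.Adj]
    (A : Finset V) (hA : GIOA G A) :
    (∀ v ∈ A, ¬ DomSet G (A.erase v)) ∧
      (∀ u : V, u ∉ A → ¬ IndSet G (insert u A)) ∧
      (∀ A_s A_t : Finset V, GIOA G A_s → GIOA G A_t → A_s ≠ A_t →
        ¬ ∃ n, IsSeq TARStep (fun S => GIOA G S) A_s A_t n) := by
  have key1 : ∀ (B : Finset V), GIOA G B → ∀ v ∈ B, ¬ DomSet G (B.erase v) := by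
    intro B hB v hv hdom
    rcases hdom v with h | ⟨u, hu, hadj⟩
    · exact (Finset.notMem_erase v B) h
    · exact hB.2.2 v hv u (Finset.mem_of_mem_erase hu) hadj
  have key2 : ∀ (B : Finset V), GIOA G B → ∀ u : V, u ∉ B → ¬ IndSet G (insert u B) := by
    intro B hB u hu hind
    rcases hB.2.1 u with h | ⟨w, hw, hadj⟩
    · exact hu h
    · exact hind u (Finset.mem_insert_self u B) w (Finset.mem_insert_of_mem hw) hadj
  refine ⟨key1 A hA, key2 A hA, ?_⟩
  rintro A_s A_t hs ht hne ⟨n, f, hn1, h0, hlast, hstep, hX⟩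
  have hn2 : 2 ≤ n := by
    by_contra h
    interval_cases n
    · exact hne (h0 ▸ hlast ▸ rfl)
  have h01 : TARStep (f 0) (f 1) := hstep 0 (by omega)
  have hX0 : GIOA G (f 0) := hX 0 (by omega)
  have hX1 : GIOA G (f 1) := hX 1 (by omega)
  rcases h01 with ⟨hsub, hcard⟩ | ⟨hsub, hcard⟩
  · obtain ⟨u, hu⟩ := Finset.card_eq_one.mp hcard
    have hu0 : u ∉ f 0 := by
      have : u ∈ f 1 \ f 0 := hu ▸ Finset.mem_singleton_self u
      exact (Finset.mem_sdiff.mp this).2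
    have hins : insert u (f 0) = f 1 := by
      have := Finset.sdiff_union_of_subset hsub
      rw [hu] at this
      rw [← this]; ext x; simp
    exact key2 (f 0) hX0 u hu0 (hins ▸ hX1.2.2)
  · obtain ⟨v, hv⟩ := Finset.card_eq_one.mp hcard
    have hv0 : v ∈ f 0 := by
      have : v ∈ f 0 \ f 1 := hv ▸ Finset.mem_singleton_self v
      exact (Finset.mem_sdiff.mp this).1
    have hv1 : v ∉ f 1 := by
      have : v ∈ f 0 \ f 1 := hv ▸ Finset.mem_singleton_self v
      exact (Finset.mem_sdiff.mp this).2
    have herase : (f 0).erase v = f 1 := by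
      apply Finset.ext
      intro x
      simp only [Finset.mem_erase]
      constructor
      · rintro ⟨hxv, hx0⟩
        by_contra hx1
        have : x ∈ f 0 \ f 1 := Finset.mem_sdiff.mpr ⟨hx0, hx1⟩
        rw [hv, Finset.mem_singleton] at this
        exact hxv this
      · intro hx1
        exact ⟨fun h => hv1 (h ▸ hx1), hsub hx1⟩
    exact key1 (f 0) hX0 v hv0 (herase ▸ hX1.2.1)
end

section
/- Let G = (V, E) be a finite simple graph and let A, B ⊆ V be offensive alliances of G such that there exists an offensive-alliance TAR sequence from A to B, or an offensive-alliance TJ sequence from A to B. Then Y(A) = Y(B), where for X ⊆ V, Y(X) = N[X] ∪ Z(X) ∪ L with L the set of leaves of G and Z(X) = {v ∈ V ∖ N[X] : N(v) ⊆ L ∪ ∂X}. -/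
open Finset

variable {V : Type*}

section Aux

variable [Fintype V] [DecidableEq V] (G : SimpleGraph V) [DecidableRel G.Adj]

lemma mem_Bdry' {A : Finset V} {v : V} :
    v ∈ Bdry G A ↔ v ∉ A ∧ ∃ u ∈ A, G.Adj v u := by
  simp [Bdry]

lemma mem_ZSet' {X : Finset V} {v : V} :
    v ∈ ZSet G X ↔ v ∉ X ∧ (∀ u ∈ X, ¬ G.Adj v u) ∧
      G.neighborFinset v ⊆ Leaves G ∪ Bdry G X := by
  simp [ZSet]

lemma mem_YSet' {X : Finset V} {v : V} :
    v ∈ YSet G X ↔ v ∈ X ∨ v ∈ Bdry G X ∨ v ∈ ZSet G X ∨ v ∈ Leaves G := by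
  simp [YSet, Finset.mem_union, or_assoc]

lemma nbrsIn_pos' {A : Finset V} {v : V} :
    0 < NbrsIn G A v ↔ ∃ u ∈ A, G.Adj v u := by
  simp [NbrsIn, Finset.card_pos, Finset.filter_nonempty_iff]

lemma nbrsIn_add_compl (A : Finset V) (v : V) :
    NbrsIn G A v + NbrsIn G Aᶜ v = G.degree v := by
  rw [NbrsIn, NbrsIn, ← Finset.card_union_of_disjoint
    (Finset.disjoint_filter_filter (disjoint_compl_right)),
    ← Finset.filter_union, Finset.union_compl, SimpleGraph.degree,
    SimpleGraph.neighborFinset_eq_filter]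

lemma nbrsIn_insert {S : Finset V} {v : V} (hv : v ∉ S) (u : V) :
    NbrsIn G (insert v S) u = NbrsIn G S u + (if G.Adj u v then 1 else 0) := by
  rw [NbrsIn, NbrsIn, Finset.filter_insert]
  split <;> rename_i h
  · rw [Finset.card_insert_of_notMem (by simp [hv])]
  · omega

/-- Key absorption: every boundary vertex of `insert v S` is a leaf or in `∂S`,
provided `insert v S` is an offensive alliance. -/
lemma bdry_insert_subset {S : Finset V} {v : V} (hv : v ∉ S)
    (hX : OffAll G (insert v S)) {u : V} (hu : u ∈ Bdry G (insert v S)) :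
    u ∈ Leaves G ∪ Bdry G S := by
  obtain ⟨hunX, a, haX, hadj⟩ := (mem_Bdry' G).1 hu
  rcases Nat.eq_zero_or_pos (NbrsIn G S u) with h0 | hpos
  · -- leaf case
    have hoff := hX u hu
    have hins := nbrsIn_insert G hv u
    have hsum := nbrsIn_add_compl G (insert v S) u
    have hle1 : NbrsIn G (insert v S) u ≤ 1 := by
      rw [hins, h0]; split <;> omega
    have hdegpos : 0 < G.degree u := by
      rw [← hsum]
      have : 0 < NbrsIn G (insert v S) u := (nbrsIn_pos' G).2 ⟨a, haX, hadj⟩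
      omega
    have : G.degree u = 1 := by omega
    exact Finset.mem_union_left _ (by simp [Leaves, this])
  · refine Finset.mem_union_right _ ((mem_Bdry' G).2 ⟨?_, ((nbrsIn_pos' G).1 hpos)⟩)
    exact fun hS => hunX (Finset.mem_insert_of_mem hS)

/-- Key lemma: adding one vertex to get an offensive alliance preserves `Y`. -/
lemma YSet_insert {S : Finset V} {v : V} (hv : v ∉ S)
    (hX : OffAll G (insert v S)) : YSet G S = YSet G (insert v S) := by
  set X := insert v S with hXdef
  apply Finset.Subset.antisymm
  · -- Y(S) ⊆ Y(X)
    intro w hw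
    rw [mem_YSet'] at hw ⊢
    rcases hw with hw | hw | hw | hw
    · exact Or.inl (Finset.mem_insert_of_mem hw)
    · -- ∂S ⊆ X ∪ ∂X
      obtain ⟨hwS, a, haS, hadj⟩ := (mem_Bdry' G).1 hw
      by_cases hwX : w ∈ X
      · exact Or.inl hwX
      · exact Or.inr (Or.inl ((mem_Bdry' G).2
          ⟨hwX, a, Finset.mem_insert_of_mem haS, hadj⟩))
    · -- Z(S) ⊆ X ∪ ∂X ∪ Z(X)
      obtain ⟨hwS, hnadj, hnb⟩ := (mem_ZSet' G).1 hw
      by_cases hwX : w ∈ X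
      · exact Or.inl hwX
      · by_cases hwv : G.Adj w v
        · exact Or.inr (Or.inl ((mem_Bdry' G).2
            ⟨hwX, v, Finset.mem_insert_self v S, hwv⟩))
        · refine Or.inr (Or.inr (Or.inl ((mem_ZSet' G).2 ⟨hwX, ?_, ?_⟩)))
          · intro u hu
            rcases Finset.mem_insert.1 hu with rfl | hu
            · exact hwv
            · exact hnadj u hu
          · intro u huN
            rcases Finset.mem_union.1 (hnb huN) with hL | hB
            · exact Finset.mem_union_left _ hL
            · obtain ⟨huS, a, haS, hadj⟩ := (mem_Bdry' G).1 hB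
              have huX : u ∉ X := by
                intro huX
                rcases Finset.mem_insert.1 huX with rfl | h
                · exact hwv (by simpa using huN)
                · exact huS h
              exact Finset.mem_union_right _ ((mem_Bdry' G).2
                ⟨huX, a, Finset.mem_insert_of_mem haS, hadj⟩)
    · exact Or.inr (Or.inr (Or.inr hw))
  · -- Y(X) ⊆ Y(S)
    intro w hw
    rw [mem_YSet'] at hw ⊢
    rcases hw with hw | hw | hw | hw
    · rcases Finset.mem_insert.1 hw with rfl | hwS
      · -- w = v
        by_cases hwS : w ∈ S
        · exact Or.inl hwS
        by_cases hwB : w ∈ Bdry G S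
        · exact Or.inr (Or.inl hwB)
        -- w ∈ Z(S)
        have hnadj : ∀ u ∈ S, ¬ G.Adj w u := by
          intro u huS hadj
          exact hwB ((mem_Bdry' G).2 ⟨hwS, u, huS, hadj⟩)
        refine Or.inr (Or.inr (Or.inl ((mem_ZSet' G).2 ⟨hwS, hnadj, ?_⟩)))
        intro u huN
        have hadj : G.Adj w u := by simpa using huN
        have huX : u ∈ Bdry G X := by
          refine (mem_Bdry' G).2 ⟨?_, w, Finset.mem_insert_self w S, hadj.symm⟩
          intro huX
          rcases Finset.mem_insert.1 huX with rfl | h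
          · exact G.loopless.irrefl u hadj.symm
          · exact hnadj u h hadj
        exact bdry_insert_subset G hv hX huX
      · exact Or.inl hwS
    · -- ∂X ⊆ L ∪ ∂S
      rcases Finset.mem_union.1 (bdry_insert_subset G hv hX hw) with hL | hB
      · exact Or.inr (Or.inr (Or.inr hL))
      · exact Or.inr (Or.inl hB)
    · -- Z(X) ⊆ Z(S) (up to leaves)
      obtain ⟨hwX, hnadj, hnb⟩ := (mem_ZSet' G).1 hw
      have hwS : w ∉ S := fun h => hwX (Finset.mem_insert_of_mem h)
      refine Or.inr (Or.inr (Or.inl ((mem_ZSet' G).2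
        ⟨hwS, fun u hu => hnadj u (Finset.mem_insert_of_mem hu), ?_⟩)))
      intro u huN
      rcases Finset.mem_union.1 (hnb huN) with hL | hB
      · exact Finset.mem_union_left _ hL
      · exact bdry_insert_subset G hv hX hB
    · exact Or.inr (Or.inr (Or.inr hw))

lemma YSet_step {A B : Finset V} (hA : OffAll G A) (hB : OffAll G B)
    (hstep : TARStep A B ∨ TJStep A B) : YSet G A = YSet G B := by
  rcases hstep with (⟨hsub, hcard⟩ | ⟨hsub, hcard⟩) | ⟨hcard, hcard1⟩
  · -- TA step
    obtain ⟨v, hv⟩ := Finset.card_eq_one.1 hcard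
    have hvmem : v ∈ B \ A := hv ▸ Finset.mem_singleton_self v
    have hBeq : B = insert v A := by
      rw [← Finset.union_sdiff_of_subset hsub, hv]
      ext x; simp [or_comm]
    rw [hBeq]
    exact YSet_insert G (Finset.mem_sdiff.1 hvmem).2 (hBeq ▸ hB)
  · -- TR step
    obtain ⟨v, hv⟩ := Finset.card_eq_one.1 hcard
    have hvmem : v ∈ A \ B := hv ▸ Finset.mem_singleton_self v
    have hAeq : A = insert v B := by
      rw [← Finset.union_sdiff_of_subset hsub, hv]
      ext x; simp [or_comm]
    rw [hAeq]
    exact (YSet_insert G (Finset.mem_sdiff.1 hvmem).2 (hAeq ▸ hA)).symm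
  · -- TJ step
    obtain ⟨a, ha⟩ := Finset.card_eq_one.1 hcard1
    have hamem : a ∈ A \ B := ha ▸ Finset.mem_singleton_self a
    have hcardBA : (B \ A).card = 1 := by
      have h1 := Finset.card_inter_add_card_sdiff A B
      have h2 := Finset.card_inter_add_card_sdiff B A
      rw [Finset.inter_comm] at h2
      omega
    obtain ⟨b, hb⟩ := Finset.card_eq_one.1 hcardBA
    have hbmem : b ∈ B \ A := hb ▸ Finset.mem_singleton_self b
    have hAeq : A = insert a (A ∩ B) := by
      ext x
      simp only [Finset.mem_insert, Finset.mem_inter]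
      constructor
      · intro hx
        by_cases hxB : x ∈ B
        · exact Or.inr ⟨hx, hxB⟩
        · left
          have : x ∈ A \ B := Finset.mem_sdiff.2 ⟨hx, hxB⟩
          rw [ha] at this
          exact Finset.mem_singleton.1 this
      · rintro (rfl | ⟨h, _⟩)
        · exact (Finset.mem_sdiff.1 hamem).1
        · exact h
    have hBeq : B = insert b (A ∩ B) := by
      ext x
      simp only [Finset.mem_insert, Finset.mem_inter]
      constructor
      · intro hx
        by_cases hxA : x ∈ A
        · exact Or.inr ⟨hxA, hx⟩
        · left
          have : x ∈ B \ A := Finset.mem_sdiff.2 ⟨hx, hxA⟩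
          rw [hb] at this
          exact Finset.mem_singleton.1 this
      · rintro (rfl | ⟨_, h⟩)
        · exact (Finset.mem_sdiff.1 hbmem).1
        · exact h
    have hanotin : a ∉ A ∩ B := fun h =>
      (Finset.mem_sdiff.1 hamem).2 (Finset.mem_inter.1 h).2
    have hbnotin : b ∉ A ∩ B := fun h =>
      (Finset.mem_sdiff.1 hbmem).2 (Finset.mem_inter.1 h).1
    have hA' : OffAll G (insert a (A ∩ B)) := by rw [← hAeq]; exact hA
    have hB' : OffAll G (insert b (A ∩ B)) := by rw [← hBeq]; exact hB
    have e1 := YSet_insert G hanotin hA'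
    have e2 := YSet_insert G hbnotin hB'
    rw [← hAeq] at e1
    rw [← hBeq] at e2
    exact e1.symm.trans e2

end Aux

theorem stmt_12 {V : Type*} [Fintype V] [DecidableEq V]
    (G : SimpleGraph V) [DecidableRel G.Adj]
    (A B : Finset V) (hA : OffAll G A) (hB : OffAll G B)
    (hseq : (∃ n, IsSeq TARStep (fun S => OffAll G S) A B n) ∨
      (∃ n, IsSeq TJStep (fun S => OffAll G S) A B n)) :
    YSet G A = YSet G B := by
  have main : ∀ (step : Finset V → Finset V → Prop),
      (∀ C D : Finset V, OffAll G C → OffAll G D → step C D →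
        TARStep C D ∨ TJStep C D) →
      ∀ n, IsSeq step (fun S => OffAll G S) A B n → YSet G A = YSet G B := by
    intro step hstep n ⟨f, h1, h0, hend, hmove, hall⟩
    have key : ∀ i, i < n → YSet G A = YSet G (f i) := by
      intro i
      induction i with
      | zero => intro _; rw [h0]
      | succ j ih =>
        intro hj
        have hjn : j < n := by omega
        rw [ih hjn]
        exact YSet_step G (hall j hjn) (hall (j + 1) hj)
          (hstep _ _ (hall j hjn) (hall (j + 1) hj) (hmove j hj))
    have := key (n - 1) (by omega)
    rwa [hend] at this
  rcases hseq with ⟨n, hs⟩ | ⟨n, hs⟩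
  · exact main TARStep (fun _ _ _ _ h => Or.inl h) n hs
  · exact main TJStep (fun _ _ _ _ h => Or.inr h) n hs
end

section
/- Let G = (V, E) be a finite simple graph, let A ⊆ V be a defensive alliance, and let v, u be vertices of the same type, i.e., N(u) ∖ {v} = N(v) ∖ {u}. If v ∈ A and u ∉ A, then (A ∖ {v}) ∪ {u} is also a defensive alliance. -/
open Finset

variable {V : Type*}

theorem stmt_13 {V : Type*} [Fintype V] [DecidableEq V]
    (G : SimpleGraph V) [DecidableRel G.Adj]
    (A : Finset V) (hA : DefAll G A) (v u : V)
    (htype : G.neighborFinset u \ {v} = G.neighborFinset v \ {u})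
    (hv : v ∈ A) (hu : u ∉ A) :
    DefAll G (insert u (A.erase v)) := by

  have huv : u ≠ v := fun h => hu (h ▸ hv)
  set σ := Equiv.swap u v with hσ
  have hsu : σ u = v := Equiv.swap_apply_left u v
  have hsv : σ v = u := Equiv.swap_apply_right u v
  have hso : ∀ x, x ≠ u → x ≠ v → σ x = x := fun x h1 h2 =>
    Equiv.swap_apply_of_ne_of_ne h1 h2
  have hinv : ∀ x, σ (σ x) = x := fun x => Equiv.swap_apply_self u v x
  have h' : ∀ x, x ≠ u → x ≠ v → (G.Adj u x ↔ G.Adj v x) := by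
    intro x hxu hxv
    have := Finset.ext_iff.mp htype x
    simp only [Finset.mem_sdiff, SimpleGraph.mem_neighborFinset,
      Finset.mem_singleton] at this
    constructor
    · intro h; exact (this.mp ⟨h, hxv⟩).1
    · intro h; exact (this.mpr ⟨h, hxu⟩).1
  have h2 : ∀ x, x ≠ u → x ≠ v → (G.Adj x u ↔ G.Adj x v) := by
    intro x h1 hB; rw [G.adj_comm, G.adj_comm x v]; exact h' x h1 hB
  have adj_swap : ∀ a b, G.Adj (σ a) (σ b) ↔ G.Adj a b := by
    intro a b
    rcases eq_or_ne a u with rfl | hau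
    · rcases eq_or_ne b a with rfl | hbu
      · simp
      rcases eq_or_ne b v with rfl | hbv
      · rw [hsu, hsv]; exact G.adj_comm b a
      · rw [hsu, hso b hbu hbv]; exact (h' b hbu hbv).symm
    rcases eq_or_ne a v with rfl | hav
    · rcases eq_or_ne b u with rfl | hbu
      · rw [hsv, hsu]; exact G.adj_comm b a
      rcases eq_or_ne b a with rfl | hbv
      · simp
      · rw [hsv, hso b hbu hbv]; exact h' b hbu hbv
    · rw [hso a hau hav]
      rcases eq_or_ne b u with rfl | hbu
      · rw [hsu]; exact (h2 a hau hav).symm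
      rcases eq_or_ne b v with rfl | hbv
      · rw [hsv]; exact h2 a hau hav
      · rw [hso b hbu hbv]
  have memB : ∀ x, x ∈ insert u (A.erase v) ↔ σ x ∈ A := by
    intro x
    rcases eq_or_ne x u with rfl | hxu
    · simp [hsu, hv]
    rcases eq_or_ne x v with rfl | hxv
    · simp [hsv, hu, huv.symm]
    · simp [hso x hxu hxv, hxu, hxv]
  have memBc : ∀ x, x ∈ (insert u (A.erase v))ᶜ ↔ σ x ∈ Aᶜ := by
    intro x
    simp only [Finset.mem_compl]
    exact not_iff_not.mpr (memB x)
  have count : ∀ (S T : Finset V), (∀ x, x ∈ S ↔ σ x ∈ T) → ∀ w,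
      NbrsIn G S w = NbrsIn G T (σ w) := by
    intro S T hST w
    unfold NbrsIn
    rw [← Finset.card_image_of_injective _ σ.injective]
    congr 1
    ext x
    simp only [Finset.mem_image, Finset.mem_filter]
    constructor
    · rintro ⟨a, ⟨haS, haw⟩, rfl⟩
      exact ⟨(hST a).mp haS, (adj_swap w a).mpr haw⟩
    · rintro ⟨hxT, hxw⟩
      refine ⟨σ x, ⟨(hST (σ x)).mpr (by rw [hinv x]; exact hxT), ?_⟩, hinv x⟩
      have h3 := adj_swap w (σ x)
      rw [hinv x] at h3
      exact h3.mp hxw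
  intro w hw
  have hσw : σ w ∈ A := (memB w).mp hw
  have hmain := hA (σ w) hσw
  rw [count _ A memB w, count _ Aᶜ memBc w]
  exact hmain
end

section
/- Let G = (V, E) be a finite simple graph, let A ⊆ V be an offensive alliance, and let v, u be vertices of the same type, i.e., N(u) ∖ {v} = N(v) ∖ {u}. If v ∈ A and u ∉ A, then (A ∖ {v}) ∪ {u} is also an offensive alliance. -/
open Finset

variable {V : Type*}

theorem stmt_14 {V : Type*} [Fintype V] [DecidableEq V]
    (G : SimpleGraph V) [DecidableRel G.Adj]
    (A : Finset V) (hA : OffAll G A) (v u : V)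
    (htype : G.neighborFinset u \ {v} = G.neighborFinset v \ {u})
    (hv : v ∈ A) (hu : u ∉ A) :
    OffAll G (insert u (A.erase v)) := by
  have huv : u ≠ v := fun h => hu (h ▸ hv)
  set e := Equiv.swap u v with he
  have hee : ∀ x, e (e x) = x := fun x => Equiv.swap_apply_self u v x
  have htw : ∀ w, w ≠ u → w ≠ v → (G.Adj u w ↔ G.Adj v w) := by
    intro w hwu hwv
    have h1 := Finset.ext_iff.mp htype w
    simpa [SimpleGraph.mem_neighborFinset, hwu, hwv] using h1
  have hadj : ∀ a b, G.Adj (e a) (e b) ↔ G.Adj a b := by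
    have key : ∀ a b, G.Adj a b → G.Adj (e a) (e b) := by
      intro a b hab
      by_cases hau : a = u
      · rw [hau] at hab ⊢
        by_cases hbv : b = v
        · rw [hbv] at hab ⊢
          simpa [he] using hab.symm
        · have hbu : b ≠ u := fun h => G.loopless.irrefl u (h ▸ hab)
          simp only [he, Equiv.swap_apply_left, Equiv.swap_apply_of_ne_of_ne hbu hbv]
          exact (htw b hbu hbv).mp hab
      · by_cases hav : a = v
        · rw [hav] at hab ⊢
          by_cases hbu : b = u
          · rw [hbu] at hab ⊢
            simpa [he] using hab.symm
          · have hbv : b ≠ v := fun h => G.loopless.irrefl v (h ▸ hab)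
            simp only [he, Equiv.swap_apply_right, Equiv.swap_apply_of_ne_of_ne hbu hbv]
            exact (htw b hbu hbv).mpr hab
        · by_cases hbu : b = u
          · rw [hbu] at hab ⊢
            simp only [he, Equiv.swap_apply_left, Equiv.swap_apply_of_ne_of_ne hau hav]
            exact ((htw a hau hav).mp hab.symm).symm
          · by_cases hbv : b = v
            · rw [hbv] at hab ⊢
              simp only [he, Equiv.swap_apply_right, Equiv.swap_apply_of_ne_of_ne hau hav]
              exact ((htw a hau hav).mpr hab.symm).symm
            · simpa [he, Equiv.swap_apply_of_ne_of_ne hau hav,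
                Equiv.swap_apply_of_ne_of_ne hbu hbv] using hab
    intro a b
    constructor
    · intro h
      have := key (e a) (e b) h
      simpa [hee] using this
    · exact key a b
  have hmem : ∀ (S : Finset V) (x : V), x ∈ S.image e ↔ e x ∈ S := by
    intro S x
    constructor
    · rintro h
      obtain ⟨y, hy, rfl⟩ := Finset.mem_image.mp h
      simpa [hee] using hy
    · intro h
      exact Finset.mem_image.mpr ⟨e x, h, hee x⟩
  have hB : insert u (A.erase v) = A.image e := by
    ext x
    rw [hmem]
    rcases eq_or_ne x u with rfl | hxu
    · simp [he, hv]
    · rcases eq_or_ne x v with rfl | hxv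
      · simp [he, hu, huv, huv.symm]
      · simp [he, Equiv.swap_apply_of_ne_of_ne hxu hxv, hxu, hxv]
  have hcount : ∀ (S : Finset V) (w : V), NbrsIn G (S.image e) w = NbrsIn G S (e w) := by
    intro S w
    unfold NbrsIn
    rw [Finset.filter_image, Finset.card_image_of_injective _ e.injective]
    congr 1
    ext a
    have : G.Adj w (e a) ↔ G.Adj (e w) a := by
      conv_lhs => rw [← hee w]
      exact hadj (e w) a
    simp [this]
  have hcompl : ∀ (S : Finset V), (S.image e)ᶜ = Sᶜ.image e := by
    intro S
    ext x
    simp [hmem]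
  rw [hB]
  intro w hw
  simp only [Bdry, Finset.mem_filter, Finset.mem_univ, true_and] at hw
  obtain ⟨hwB, z, hzB, hwz⟩ := hw
  have hewA : e w ∉ A := fun h => hwB ((hmem A w).mpr h)
  have hbdry : e w ∈ Bdry G A := by
    simp only [Bdry, Finset.mem_filter, Finset.mem_univ, true_and]
    refine ⟨hewA, e z, (hmem A z).mp hzB, ?_⟩
    have := (hadj w z).mpr hwz
    exact this
  have := hA (e w) hbdry
  rw [hcount, hcompl, hcount]
  exact this
end

section
/- Let G = (V, E) be a finite simple graph and let A ⊆ V be a global offensive alliance with |A| ≤ k. Then every vertex v ∈ V with d_G(v) > 2k belongs to A. -/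
open Finset

variable {V : Type*}

theorem stmt_17 {V : Type*} [Fintype V] [DecidableEq V]
    (G : SimpleGraph V) [DecidableRel G.Adj]
    (A : Finset V) (hAoff : OffAll G A) (hAdom : DomSet G A)
    (k : ℕ) (hk : A.card ≤ k) :
    ∀ v : V, 2 * k < G.degree v → v ∈ A := by
  intro v hv
  by_contra hvA
  have hbd : v ∈ Bdry G A := by
    simp only [Bdry, mem_filter, mem_univ, true_and]
    exact ⟨hvA, (hAdom v).resolve_left hvA⟩
  have hoff := hAoff v hbd
  have hsplit : NbrsIn G A v + NbrsIn G Aᶜ v = G.degree v := by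
    unfold NbrsIn
    rw [SimpleGraph.degree, ← card_union_of_disjoint]
    · congr 1
      ext u
      simp [SimpleGraph.mem_neighborFinset]
      tauto
    · exact disjoint_filter_filter (disjoint_compl_right)
  have hle : NbrsIn G A v ≤ k := le_trans (card_filter_le _ _) hk
  omega
end

section
/- Let G = (V, E) be a finite simple graph and let A ⊆ V be a powerful alliance with |A| = k. Then |∂A| ≤ k², every x ∈ ∂A satisfies d_{V∖A}(x) ≤ k − 1, and consequently |N(∂A) ∖ A| ≤ k³. -/
open Finset

variable {V : Type*}

theorem stmt_18 {V : Type*} [Fintype V] [DecidableEq V]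
    (G : SimpleGraph V) [DecidableRel G.Adj]
    (A : Finset V) (hA : PowAll G A) (k : ℕ) (hk : A.card = k) :
    (Bdry G A).card ≤ k ^ 2 ∧
      (∀ x ∈ Bdry G A, NbrsIn G Aᶜ x ≤ k - 1) ∧
      ((Finset.univ.filter (fun v => ∃ u ∈ Bdry G A, G.Adj v u)) \ A).card ≤ k ^ 3 := by
  subst hk
  -- degree bound on boundary vertices
  have hx : ∀ x ∈ Bdry G A, NbrsIn G Aᶜ x ≤ A.card - 1 := by
    intro x hx
    have h1 := hA.2 x hx
    have h2 : NbrsIn G A x ≤ A.card := Finset.card_filter_le _ _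
    omega
  -- defensive bound for members
  have hbd : ∀ u ∈ A, (Aᶜ.filter (fun v => G.Adj u v)).card ≤ A.card := by
    intro u hu
    have hdef := hA.1 u hu
    have hsub : A.filter (fun v => G.Adj u v) ⊆ A.erase u := by
      intro v hv
      simp only [Finset.mem_filter] at hv
      exact Finset.mem_erase.mpr ⟨fun h => G.loopless.irrefl u (h ▸ hv.2), hv.1⟩
    have h1 : NbrsIn G A u ≤ A.card - 1 := by
      have := Finset.card_le_card hsub
      rwa [Finset.card_erase_of_mem hu] at this
    have hpos : 1 ≤ A.card := Finset.card_pos.mpr ⟨u, hu⟩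
    unfold NbrsIn at *
    omega
  have hBsub : Bdry G A ⊆ A.biUnion (fun u => Aᶜ.filter (fun v => G.Adj u v)) := by
    intro x hx
    simp only [Bdry, Finset.mem_filter, Finset.mem_univ, true_and] at hx
    obtain ⟨hxA, u, huA, hadj⟩ := hx
    exact Finset.mem_biUnion.mpr ⟨u, huA,
      Finset.mem_filter.mpr ⟨Finset.mem_compl.mpr hxA, hadj.symm⟩⟩
  have hB : (Bdry G A).card ≤ A.card ^ 2 := by
    calc (Bdry G A).card ≤ (A.biUnion (fun u => Aᶜ.filter (fun v => G.Adj u v))).card :=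
          Finset.card_le_card hBsub
      _ ≤ ∑ u ∈ A, (Aᶜ.filter (fun v => G.Adj u v)).card := Finset.card_biUnion_le
      _ ≤ ∑ _u ∈ A, A.card := Finset.sum_le_sum hbd
      _ = A.card ^ 2 := by rw [Finset.sum_const, smul_eq_mul, sq]
  refine ⟨hB, hx, ?_⟩
  have hSsub : (Finset.univ.filter (fun v => ∃ u ∈ Bdry G A, G.Adj v u)) \ A ⊆
      (Bdry G A).biUnion (fun x => Aᶜ.filter (fun v => G.Adj x v)) := by
    intro v hv
    simp only [Finset.mem_sdiff, Finset.mem_filter, Finset.mem_univ, true_and] at hv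
    obtain ⟨⟨u, hu, hadj⟩, hvA⟩ := hv
    exact Finset.mem_biUnion.mpr ⟨u, hu,
      Finset.mem_filter.mpr ⟨Finset.mem_compl.mpr hvA, hadj.symm⟩⟩
  calc ((Finset.univ.filter (fun v => ∃ u ∈ Bdry G A, G.Adj v u)) \ A).card
      ≤ ((Bdry G A).biUnion (fun x => Aᶜ.filter (fun v => G.Adj x v))).card :=
        Finset.card_le_card hSsub
    _ ≤ ∑ x ∈ Bdry G A, (Aᶜ.filter (fun v => G.Adj x v)).card := Finset.card_biUnion_le
    _ ≤ ∑ _x ∈ Bdry G A, (A.card - 1) := Finset.sum_le_sum hx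
    _ = (Bdry G A).card * (A.card - 1) := by rw [Finset.sum_const, smul_eq_mul]
    _ ≤ A.card ^ 2 * A.card := Nat.mul_le_mul hB (Nat.sub_le _ _)
    _ = A.card ^ 3 := by ring
end

section
/- Let G = (V, E) be a finite simple graph and let A, B ⊆ V be global independent offensive alliances such that B is obtained from A by one token jumping step, with v the unique vertex of A ∖ B and u the unique vertex of B ∖ A. Then u and v are adjacent, both u and v have degree one, and hence {u, v} is an isolated edge of G (so this token jumping step is in fact a token sliding step along an isolated edge). -/
open Finset

variable {V : Type*}

lemma nbrs_split {V : Type*} [Fintype V] [DecidableEq V] (G : SimpleGraph V)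
    [DecidableRel G.Adj] (A : Finset V) (v : V) :
    NbrsIn G A v + NbrsIn G Aᶜ v = G.degree v := by
  unfold NbrsIn
  rw [← Finset.card_union_of_disjoint, ← Finset.filter_union, Finset.union_compl]
  · rw [SimpleGraph.degree, SimpleGraph.neighborFinset_eq_filter]
  · exact Finset.disjoint_filter_filter disjoint_compl_right

lemma key_gioa {V : Type*} [Fintype V] [DecidableEq V] (G : SimpleGraph V)
    [DecidableRel G.Adj] (X Y : Finset V) (hY : GIOA G Y) (hXind : IndSet G X)
    (u v : V) (hvX : v ∈ X) (hvY : v ∉ Y) (hYX : Y \ X = {u}) :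
    G.Adj v u ∧ G.degree v = 1 := by
  have hsub : Y.filter (fun w => G.Adj v w) ⊆ {u} := by
    intro w hw
    rw [Finset.mem_filter] at hw
    by_cases hwX : w ∈ X
    · exact absurd hw.2 (hXind v hvX w hwX)
    · have : w ∈ Y \ X := Finset.mem_sdiff.mpr ⟨hw.1, hwX⟩
      rw [hYX, Finset.mem_singleton] at this
      exact Finset.mem_singleton.mpr this
  have hcard : (Y.filter (fun w => G.Adj v w)).card ≤ 1 := by
    simpa using Finset.card_le_card hsub
  have hbdry : v ∈ Bdry G Y := by
    rw [Bdry, Finset.mem_filter]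
    refine ⟨Finset.mem_univ v, hvY, ?_⟩
    rcases hY.2.1 v with h | h
    · exact absurd h hvY
    · exact h
  have hoff := hY.1 v hbdry
  have hY1 : NbrsIn G Y v = 1 := by
    have : NbrsIn G Y v ≤ 1 := hcard
    omega
  have hYc0 : NbrsIn G Yᶜ v = 0 := by omega
  have heq : Y.filter (fun w => G.Adj v w) = {u} := by
    rcases Finset.subset_singleton_iff.mp hsub with h | h
    · rw [NbrsIn, h] at hY1; simp at hY1
    · exact h
  have hadj : G.Adj v u := by
    have := Finset.mem_filter.mp (heq ▸ Finset.mem_singleton_self u)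
    exact this.2
  have hdeg := nbrs_split G Y v
  exact ⟨hadj, by omega⟩

theorem stmt_19 {V : Type*} [Fintype V] [DecidableEq V]
    (G : SimpleGraph V) [DecidableRel G.Adj] (A B : Finset V)
    (hA : GIOA G A) (hB : GIOA G B) (hTJ : TJStep A B)
    (v u : V) (hv : A \ B = {v}) (hu : B \ A = {u}) :
    G.Adj u v ∧ G.degree u = 1 ∧ G.degree v = 1 := by
  have hvA : v ∈ A ∧ v ∉ B := by
    have := Finset.mem_sdiff.mp (hv ▸ Finset.mem_singleton_self v)
    exact this
  have huB : u ∈ B ∧ u ∉ A := by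
    have := Finset.mem_sdiff.mp (hu ▸ Finset.mem_singleton_self u)
    exact this
  have h1 := key_gioa G A B hB hA.2.2 u v hvA.1 hvA.2 hu
  have h2 := key_gioa G B A hA hB.2.2 v u huB.1 huB.2 hv
  exact ⟨h2.1, h2.2, h1.2⟩
end
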